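/- Let H be symmetric PSD with γ λ_max(H) < 1 and define C_t by C_0 = 0, C_t = (I − γH) C_{t−1} (I − γH) + γ²σ² H. Then for all t, C_t ⪰ (γσ²/2) (I − (I − γH)^{2t}). -/

import Mathlib

open Matrix

lemma psd_add {d : ℕ} {A B : Matrix (Fin d) (Fin d) ℝ} (hA : A.PosSemidef)
    (hB : B.PosSemidef) : (A + B).PosSemidef := by
  refine ⟨hA.1.add hB.1, fun x => ?_⟩
  exact (hA.add hB).2 x

lemma psd_smul {d : ℕ} {A : Matrix (Fin d) (Fin d) ℝ} {c : ℝ} (hA : A.PosSemidef)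
    (hc : 0 ≤ c) : (c • A).PosSemidef := by
  refine ⟨by rw [IsHermitian, conjTranspose_smul, hA.1]; simp, fun x => ?_⟩
  exact (hA.smul hc).2 x

/-- for symmetric PSD `H` with `0 < γ` and `γ λ_max(H) < 1`
(i.e. `I - γH ≻ 0`), the recursion `C_0 = 0`,
`C_t = (I - γH) C_{t-1} (I - γH) + γ²σ² H` satisfies
`C_t ⪰ (γσ²/2) (I - (I - γH)^{2t})` for all `t`. -/
theorem variance_recursion_lower {d : ℕ} (H : Matrix (Fin d) (Fin d) ℝ) (γ σ2 : ℝ)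
    (C : ℕ → Matrix (Fin d) (Fin d) ℝ)
    (hH : H.PosSemidef) (hγ : 0 < γ) (hσ : 0 ≤ σ2)
    (hlt : ((1 : Matrix (Fin d) (Fin d) ℝ) - γ • H).PosDef)
    (h0 : C 0 = 0)
    (hrec : ∀ t, C (t + 1) = (1 - γ • H) * C t * (1 - γ • H) + (γ ^ 2 * σ2) • H) :
    ∀ t, (C t - (γ * σ2 / 2) • ((1 : Matrix (Fin d) (Fin d) ℝ)
      - (1 - γ • H) ^ (2 * t))).PosSemidef := by
  set B : Matrix (Fin d) (Fin d) ℝ := 1 - γ • H with hB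
  have hBh : Bᴴ = B := by
    rw [hB, conjTranspose_sub, conjTranspose_one, conjTranspose_smul, hH.1]; simp
  have hHH : ((γ ^ 3 * σ2 / 2) • (H * H)).PosSemidef := by
    apply psd_smul
    · have : H * H = Hᴴ * H := by rw [hH.1]
      rw [this]; exact posSemidef_conjTranspose_mul_self H
    · positivity
  intro t
  induction t with
  | zero =>
    simpa [h0] using (Matrix.PosSemidef.zero : PosSemidef (0 : Matrix (Fin d) (Fin d) ℝ))
  | succ t ih =>
    have key : C (t + 1) - (γ * σ2 / 2) • ((1 : Matrix (Fin d) (Fin d) ℝ)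
        - B ^ (2 * (t + 1)))
        = B * (C t - (γ * σ2 / 2) • ((1 : Matrix (Fin d) (Fin d) ℝ) - B ^ (2 * t))) * B
          + (γ ^ 3 * σ2 / 2) • (H * H) := by
      have hpow : B ^ (2 * (t + 1)) = B * B ^ (2 * t) * B := by
        rw [show 2 * (t + 1) = 1 + 2 * t + 1 by ring, pow_add, pow_add, pow_one]
      rw [hrec t, hpow, hB]
      simp only [mul_sub, sub_mul, mul_add, add_mul, smul_sub, smul_add, smul_smul,
        mul_smul_comm, smul_mul_assoc, mul_one, one_mul]
      module
    rw [key]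
    apply psd_add _ hHH
    have := ih.mul_mul_conjTranspose_same B
    rwa [hBh] at this
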